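/- Let n ≥ 4 and m = ⌊n/2⌋. If h(x₁,...,xₙ) is a real quadratic form that vanishes at every 0/1 point of ℝⁿ having exactly m ones, and at every 0/1 point having exactly m+1 ones, then h is identically zero. -/

import Mathlib

open Finset

/-- If a real quadratic form `h(x) = ∑ aᵢxᵢ² + ∑_{i<j} aᵢⱼxᵢxⱼ` in `n ≥ 4` variables vanishes
at every 0/1 point with exactly `m = ⌊n/2⌋` ones and at every 0/1 point with exactly `m+1`
ones, then `h` is identically zero. -/
theorem stmt6 (n : ℕ) (hn : 4 ≤ n) (m : ℕ) (hm : m = n / 2)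
    (a : Fin n → ℝ) (b : Fin n → Fin n → ℝ)
    (hvan : ∀ x : Fin n → ℝ, (∀ i, x i = 0 ∨ x i = 1) →
      ((univ.filter fun i => x i = 1).card = m ∨
       (univ.filter fun i => x i = 1).card = m + 1) →
      (∑ i : Fin n, a i * x i ^ 2) + ∑ i : Fin n, ∑ j ∈ Ioi i, b i j * x i * x j = 0) :
    (∀ i, a i = 0) ∧ (∀ i j : Fin n, i < j → b i j = 0) := by
  have hm2 : 2 ≤ m := by omega
  have hmn : m + 1 ≤ n := by omega
  -- symmetrized coefficients, made opaque
  obtain ⟨c, hcsum, csymm, cdiag⟩ :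
      ∃ c : Fin n → Fin n → ℝ,
        (∀ i j, c i j = (if i < j then b i j else 0) + (if j < i then b j i else 0)) ∧
        (∀ i j, c i j = c j i) ∧ (∀ i, c i i = 0) := by
    refine ⟨fun i j => (if i < j then b i j else 0) + (if j < i then b j i else 0),
      fun i j => rfl, fun i j => by ring, fun i => by simp⟩
  obtain ⟨G, hGdef⟩ :
      ∃ G : Finset (Fin n) → ℝ,
        ∀ S, G S = 2 * ∑ i ∈ S, a i + ∑ i ∈ S, ∑ j ∈ S, c i j :=
    ⟨_, fun S => rfl⟩
  -- Step A: G vanishes on sets of size m or m+1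
  have key : ∀ S : Finset (Fin n), S.card = m ∨ S.card = m + 1 → G S = 0 := by
    intro S hS
    set x : Fin n → ℝ := fun i => if i ∈ S then 1 else 0 with hxdef
    have h01 : ∀ i, x i = 0 ∨ x i = 1 := by
      intro i; by_cases h : i ∈ S <;> simp [hxdef, h]
    have hfil : univ.filter (fun i => x i = 1) = S := by
      ext i; by_cases h : i ∈ S <;> simp [hxdef, h]
    have h0 := hvan x h01 (by rw [hfil]; exact hS)
    have e1 : ∑ i, a i * x i ^ 2 = ∑ i ∈ S, a i := by
      rw [Finset.sum_congr rfl (fun i _ =>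
        show a i * x i ^ 2 = if i ∈ S then a i else 0 from by
          by_cases h : i ∈ S <;> simp [hxdef, h])]
      rw [Finset.sum_ite_mem, Finset.univ_inter]
    have e2 : ∑ i, ∑ j ∈ Ioi i, b i j * x i * x j
        = ∑ i ∈ S, ∑ j ∈ S, (if i < j then b i j else 0) := by
      have step1 : ∀ i : Fin n, ∑ j ∈ Ioi i, b i j * x i * x j
          = ∑ j : Fin n, (if j ∈ S ∧ i < j then (if i ∈ S then b i j else 0) else 0) := by
        intro i
        rw [show (Ioi i : Finset (Fin n)) = univ.filter (fun j => i < j) from by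
          ext j; simp]
        rw [Finset.sum_filter]
        refine Finset.sum_congr rfl fun j _ => ?_
        by_cases h1 : i ∈ S <;> by_cases h2 : j ∈ S <;> by_cases h3 : i < j <;>
          simp [hxdef, h1, h2, h3]
      have step2 : ∀ i : Fin n,
          ∑ j : Fin n, (if j ∈ S ∧ i < j then (if i ∈ S then b i j else 0) else 0)
          = if i ∈ S then ∑ j ∈ S, (if i < j then b i j else 0) else 0 := by
        intro i
        by_cases h : i ∈ S
        · simp only [h, if_true]
          rw [Finset.sum_congr rfl (fun j _ =>
            show (if j ∈ S ∧ i < j then b i j else 0)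
              = if j ∈ S then (if i < j then b i j else 0) else 0 from by
            by_cases h2 : j ∈ S <;> simp [h2])]
          rw [Finset.sum_ite_mem, Finset.univ_inter]
        · simp [h]
      rw [Finset.sum_congr rfl fun i _ => step1 i,
        Finset.sum_congr rfl fun i _ => step2 i,
        Finset.sum_ite_mem, Finset.univ_inter]
    have e3 : ∑ i ∈ S, ∑ j ∈ S, c i j
        = 2 * ∑ i ∈ S, ∑ j ∈ S, (if i < j then b i j else 0) := by
      rw [Finset.sum_congr rfl (fun i (_ : i ∈ S) =>
        Finset.sum_congr rfl (fun j (_ : j ∈ S) => hcsum i j))]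
      rw [Finset.sum_congr rfl (fun i (_ : i ∈ S) => Finset.sum_add_distrib),
        Finset.sum_add_distrib]
      rw [Finset.sum_comm (s := S) (t := S)
        (f := fun i j => if j < i then b j i else 0)]
      ring
    rw [e1, e2] at h0
    rw [hGdef, e3]
    linarith
  -- insertion formula
  have Gins : ∀ (i : Fin n) (S : Finset (Fin n)), i ∉ S →
      G (insert i S) = G S + 2 * a i + 2 * ∑ j ∈ S, c i j := by
    intro i S hi
    rw [hGdef, hGdef, Finset.sum_insert hi, Finset.sum_insert hi,
      Finset.sum_insert hi]
    rw [Finset.sum_congr rfl (fun p (_ : p ∈ S) =>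
      Finset.sum_insert hi (f := fun q => c p q))]
    rw [Finset.sum_add_distrib]
    have hswap : ∑ p ∈ S, c p i = ∑ p ∈ S, c i p :=
      Finset.sum_congr rfl fun p _ => csymm p i
    rw [hswap, cdiag]
    ring
  -- existence of (m-1)-sets avoiding two points
  have exT : ∀ i j : Fin n, ∃ T : Finset (Fin n), T.card = m - 1 ∧ i ∉ T ∧ j ∉ T := by
    intro i j
    have hcard : m - 1 ≤ (univ \ {i, j} : Finset (Fin n)).card := by
      rw [Finset.card_sdiff_of_subset (Finset.subset_univ _), Finset.card_univ, Fintype.card_fin]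
      have : ({i, j} : Finset (Fin n)).card ≤ 2 := Finset.card_insert_le _ _ |>.trans (by simp)
      omega
    obtain ⟨T, hTsub, hTcard⟩ := Finset.exists_subset_card_eq hcard
    refine ⟨T, hTcard, fun h => ?_, fun h => ?_⟩
    · have := hTsub h; simp at this
    · have := hTsub h; simp at this
  -- Step B: 2 c i j = G T for (m-1)-sets T avoiding i, j
  have hB : ∀ (T : Finset (Fin n)) (i j : Fin n), T.card = m - 1 → i ∉ T → j ∉ T →
      i ≠ j → 2 * c i j = G T := by
    intro T i j hT hi hj hij
    have hjS1 : j ∉ insert i T := by simp [hij.symm, hj]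
    have e1 := Gins i T hi
    have e2 := Gins j T hj
    have e12 := Gins j (insert i T) hjS1
    have hS1card : (insert i T).card = m := by
      rw [Finset.card_insert_of_notMem hi, hT]; omega
    have hS2card : (insert j T).card = m := by
      rw [Finset.card_insert_of_notMem hj, hT]; omega
    have hS12card : (insert j (insert i T)).card = m + 1 := by
      rw [Finset.card_insert_of_notMem hjS1, hS1card]
    have k1 := key _ (Or.inl hS1card)
    have k2 := key _ (Or.inl hS2card)
    have k12 := key _ (Or.inr hS12card)
    rw [Finset.sum_insert hi] at e12
    rw [k1, k12] at e12
    rw [k1] at e1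
    rw [k2] at e2
    have := csymm i j
    linarith
  -- Step C: G is constant on (m-1)-sets
  have hconst : ∀ T T' : Finset (Fin n), T.card = m - 1 → T'.card = m - 1 →
      G T = G T' := by
    intro T T' hT hT'
    have hU : (T ∪ T').card ≤ 2 * m - 2 := by
      have := Finset.card_union_le T T'
      omega
    have hbig : 1 < (univ \ (T ∪ T') : Finset (Fin n)).card := by
      rw [Finset.card_sdiff_of_subset (Finset.subset_univ _), Finset.card_univ, Fintype.card_fin]
      omega
    obtain ⟨i, hi, j, hj, hij⟩ := Finset.one_lt_card.mp hbig
    simp only [Finset.mem_sdiff, Finset.mem_union] at hi hj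
    have h1 := hB T i j hT (fun h => hi.2 (Or.inl h)) (fun h => hj.2 (Or.inl h)) hij
    have h2 := hB T' i j hT' (fun h => hi.2 (Or.inr h)) (fun h => hj.2 (Or.inr h)) hij
    linarith
  -- a fixed (m-1)-set T₀ and γ
  obtain ⟨T₀, -, hT₀⟩ := Finset.exists_subset_card_eq
    (show m - 1 ≤ (univ : Finset (Fin n)).card by
      rw [Finset.card_univ, Fintype.card_fin]; omega)
  set γ : ℝ := G T₀ with hγ
  have hcγ : ∀ i j : Fin n, i ≠ j → 2 * c i j = γ := by
    intro i j hij
    obtain ⟨T, hT, hi, hj⟩ := exT i j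
    rw [hB T i j hT hi hj hij, hconst T T₀ hT hT₀]
  -- every a i satisfies 2 a i + (m-1) γ + γ = 0
  have ha : ∀ i : Fin n, 2 * a i + ((m - 1 : ℕ) : ℝ) * γ + γ = 0 := by
    intro i
    obtain ⟨T, hT, hi, -⟩ := exT i i
    have e1 := Gins i T hi
    have hScard : (insert i T).card = m := by
      rw [Finset.card_insert_of_notMem hi, hT]; omega
    have k1 := key _ (Or.inl hScard)
    have hsum : ∑ j ∈ T, 2 * c i j = ((m - 1 : ℕ) : ℝ) * γ := by
      rw [Finset.sum_congr rfl (fun j hj => hcγ i j (fun h => hi (h ▸ hj)))]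
      rw [Finset.sum_const, hT, nsmul_eq_mul]
    have hGT : G T = γ := hconst T T₀ hT hT₀
    rw [k1, hGT] at e1
    rw [Finset.mul_sum] at e1
    linarith [hsum]
  -- evaluate G on an (m+1)-set to get γ = 0
  obtain ⟨S, -, hScard⟩ := Finset.exists_subset_card_eq
    (show m + 1 ≤ (univ : Finset (Fin n)).card by
      rw [Finset.card_univ, Fintype.card_fin]; omega)
  have kS := key S (Or.inr hScard)
  have hinner : ∀ i ∈ S, 2 * ∑ j ∈ S, c i j = (m : ℝ) * γ := by
    intro i hiS
    rw [Finset.mul_sum, ← Finset.add_sum_erase _ _ hiS]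
    rw [Finset.sum_congr rfl (fun j hj =>
      hcγ i j (fun h => (Finset.mem_erase.mp hj).1 h.symm))]
    rw [Finset.sum_const, Finset.card_erase_of_mem hiS, hScard, cdiag, nsmul_eq_mul]
    push_cast
    ring
  have hγ0 : γ = 0 := by
    have hsum1 : ∑ i ∈ S, 2 * a i = -(((m - 1 : ℕ) : ℝ) * γ + γ) * (m + 1 : ℕ) := by
      rw [Finset.sum_congr rfl (fun i _ =>
        show 2 * a i = -(((m - 1 : ℕ) : ℝ) * γ + γ) from by linarith [ha i])]
      rw [Finset.sum_const, hScard, nsmul_eq_mul]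
      ring
    have hsum2 : ∑ i ∈ S, (2 * ∑ j ∈ S, c i j) = ((m : ℝ) * γ) * (m + 1 : ℕ) := by
      rw [Finset.sum_congr rfl hinner, Finset.sum_const, hScard, nsmul_eq_mul]
      ring
    have h2sum : (2:ℝ) * ∑ i ∈ S, a i = ∑ i ∈ S, 2 * a i := by
      rw [Finset.mul_sum]
    have h2sum2 : (2:ℝ) * ∑ i ∈ S, ∑ j ∈ S, c i j
        = ∑ i ∈ S, (2 * ∑ j ∈ S, c i j) := by
      rw [Finset.mul_sum]
    have hmcast : ((m - 1 : ℕ) : ℝ) = (m : ℝ) - 1 := by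
      have h1 : (1:ℕ) ≤ m := by omega
      push_cast [h1]; ring
    have hpcast : ((m + 1 : ℕ) : ℝ) = (m : ℝ) + 1 := by push_cast; ring
    have hmpos : (2:ℝ) ≤ (m:ℝ) := by exact_mod_cast hm2
    have E : 4 * (∑ i ∈ S, a i) + 2 * (∑ i ∈ S, ∑ j ∈ S, c i j) = 0 := by
      have h := kS
      rw [hGdef] at h
      linarith
    have A : 2 * (∑ i ∈ S, a i) = -(((m:ℝ)-1)*γ+γ) * ((m:ℝ)+1) := by
      rw [h2sum, hsum1, hmcast, hpcast]
    have B : 2 * (∑ i ∈ S, ∑ j ∈ S, c i j) = (m:ℝ)*γ*((m:ℝ)+1) := by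
      rw [h2sum2, hsum2, hpcast]
    have hfac : (m:ℝ)*((m:ℝ)+1)*γ = 0 := by linear_combination 2*A + B - E
    rcases mul_eq_zero.mp hfac with h | h
    · nlinarith
    · exact h
  have haz : ∀ i, a i = 0 := by
    intro i
    have := ha i
    rw [hγ0] at this
    linarith
  refine ⟨haz, fun i j hij => ?_⟩
  have := hcγ i j (ne_of_lt hij)
  rw [hγ0] at this
  rw [hcsum i j, if_pos hij, if_neg (asymm hij)] at this
  linarith
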